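/- arXiv:2201.13302 — 3 statements merged into one kernel-verified Lean document; each statement's English description precedes it below -/
import Mathlib

section
/- Join commutes with valuations on symbolic tables: if R : K₁ ▷ V₁ and S : K₂ ▷ V₂ are s-tables over variable set X with V₁ ∩ V₂ = ∅ (and value attributes of one disjoint from the attributes of the other except for shared key attributes), and h : X → ℝ is a valuation, then h(R) ⋈ h(S) = h(R ⋈ S). -/
open MvPolynomial

/-- The join of two tables over attributes: keys agree with the respective
sources on `K₁` resp. `K₂`, values agree with the respective sources on `V₁`
resp. `V₂`. -/
def joinTable {A D E : Type*} (K₁ K₂ V₁ V₂ : Set A)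
    (R S : Set ((A → D) × (A → E))) : Set ((A → D) × (A → E)) :=
  {t | ∃ r ∈ R, ∃ s ∈ S,
    (∀ a ∈ K₁, t.1 a = r.1 a) ∧ (∀ a ∈ K₂, t.1 a = s.1 a) ∧
    (∀ a ∈ V₁, t.2 a = r.2 a) ∧ (∀ a ∈ V₂, t.2 a = s.2 a)}

/-- join commutes with valuations on s-tables `R : K₁ ▷ V₁`,
`S : K₂ ▷ V₂` over variables `X`, provided `V₁ ∩ V₂ = ∅` and the value
attributes of each table are disjoint from the attributes of the other:
`h(R) ⋈ h(S) = h(R ⋈ S)`. -/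
theorem join_commutes_with_valuation
    {A D X : Type*} (K₁ V₁ K₂ V₂ : Set A)
    (R S : Set ((A → D) × (A → MvPolynomial X ℝ)))
    (hVV : Disjoint V₁ V₂) (hV₁K₂ : Disjoint V₁ K₂) (hV₂K₁ : Disjoint V₂ K₁)
    (hR : ∀ t ∈ R, ∀ t' ∈ R, (∀ a ∈ K₁, t.1 a = t'.1 a) → ∀ a ∈ V₁, t.2 a = t'.2 a)
    (hS : ∀ t ∈ S, ∀ t' ∈ S, (∀ a ∈ K₂, t.1 a = t'.1 a) → ∀ a ∈ V₂, t.2 a = t'.2 a)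
    (h : X → ℝ) :
    joinTable K₁ K₂ V₁ V₂
        ((fun t : (A → D) × (A → MvPolynomial X ℝ) =>
            (t.1, fun a => eval h (t.2 a))) '' R)
        ((fun t : (A → D) × (A → MvPolynomial X ℝ) =>
            (t.1, fun a => eval h (t.2 a))) '' S)
      = (fun t : (A → D) × (A → MvPolynomial X ℝ) =>
            (t.1, fun a => eval h (t.2 a))) '' joinTable K₁ K₂ V₁ V₂ R S := by
  classical
  ext t
  constructor
  · rintro ⟨_, ⟨r, hr, rfl⟩, _, ⟨s, hs, rfl⟩, hK₁, hK₂, hV₁, hV₂⟩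
    refine ⟨(t.1, fun a => if a ∈ V₁ then r.2 a else if a ∈ V₂ then s.2 a
        else MvPolynomial.C (t.2 a)), ⟨r, hr, s, hs, hK₁, hK₂, ?_, ?_⟩, ?_⟩
    · intro a ha; simp [ha]
    · intro a ha
      have : a ∉ V₁ := fun h' => hVV.ne_of_mem h' ha rfl
      simp [this, ha]
    · ext a
      · rfl
      · simp only
        by_cases h1 : a ∈ V₁
        · simpa [h1] using (hV₁ a h1).symm
        · by_cases h2 : a ∈ V₂
          · simpa [h1, h2] using (hV₂ a h2).symm
          · simp [h1, h2]
  · rintro ⟨u, ⟨r, hr, s, hs, hK₁, hK₂, hV₁, hV₂⟩, rfl⟩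
    exact ⟨_, ⟨r, hr, rfl⟩, _, ⟨s, hs, rfl⟩, hK₁, hK₂,
      fun a ha => by simp [hV₁ a ha], fun a ha => by simp [hV₂ a ha]⟩
end

section
/- For any well-formed query q built from selection (on keys only), projection-away (of values only), join (overlapping on keys only), discriminated union, difference (on keys), renaming, derivation, and grouping/sum aggregation, and any s-instance I over variable set X with globally scoped variables, the set of ground query results over all valuations equals the set of groundings of the symbolic result: q⟦I⟧ = ⟦q(I)⟧, where ⟦I⟧ = { h(I) | h : X → ℝ } and q⟦I⟧ = { q(J) | J ∈ ⟦I⟧ }. -/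
open scoped Classical

namespace Eris

/-- A table over key values `D` and value entries `E`: a set of tuples, each a
pair of a ground key assignment and a value assignment. -/
abbrev Table (A D E : Type*) := Set ((A → D) × (A → E))

/-- Deep embedding of the query language over finite maps: selection on keys,
projection-away of values, join overlapping only on keys, discriminated union,
difference on keys, renaming, derivation, and grouping/sum aggregation.
Constructors carry the attribute-set annotations needed by the semantics. -/
inductive Query (A D Rl : Type*) where
  | rel : Rl → Query A D Rl
  | sel : ((A → D) → Prop) → Query A D Rl → Query A D Rl
  | proj : Set A → Query A D Rl → Query A D Rl
  | join : Set A → Set A → Set A → Query A D Rl → Query A D Rl → Query A D Rl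
  | dunion : A → D → D → Query A D Rl → Query A D Rl → Query A D Rl
  | diff : Set A → Query A D Rl → Query A D Rl → Query A D Rl
  | ren : A ≃ A → Query A D Rl → Query A D Rl
  | derive : A → MvPolynomial A ℝ → Query A D Rl → Query A D Rl
  | agg : Set A → Set A → Query A D Rl → Query A D Rl

variable {A D X Rl : Type*}

/-- Semantics of queries over an instance `I`, polymorphic in the value ring
`E` (an `ℝ`-algebra), so that the same semantics covers ground tables
(`E = ℝ`) and symbolic tables (`E = MvPolynomial X ℝ`). -/
noncomputable def sem [Inhabited D] {E : Type*} [CommRing E] [Algebra ℝ E]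
    (I : Rl → Table A D E) : Query A D Rl → Table A D E
  | .rel r => I r
  | .sel c q => {t ∈ sem I q | c t.1}
  | .proj W q =>
      (fun t : (A → D) × (A → E) =>
        (t.1, fun a => if a ∈ W then 0 else t.2 a)) '' sem I q
  | .join K₁ K₂ V₁ q₁ q₂ =>
      {u | ∃ r ∈ sem I q₁, ∃ s ∈ sem I q₂,
        (∀ a, a ∈ K₁ → a ∈ K₂ → r.1 a = s.1 a) ∧
        u = ((fun a => if a ∈ K₁ then r.1 a else s.1 a),
             fun a => if a ∈ V₁ then r.2 a else s.2 a)}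
  | .dunion B d₀ d₁ q₁ q₂ =>
      (fun t : (A → D) × (A → E) => (Function.update t.1 B d₀, t.2)) '' sem I q₁ ∪
      (fun t : (A → D) × (A → E) => (Function.update t.1 B d₁, t.2)) '' sem I q₂
  | .diff K q₁ q₂ =>
      {t ∈ sem I q₁ | ¬ ∃ s ∈ sem I q₂, ∀ a ∈ K, t.1 a = s.1 a}
  | .ren σ q =>
      (fun t : (A → D) × (A → E) => (t.1 ∘ σ, t.2 ∘ σ)) '' sem I q
  | .derive B e q =>
      (fun t : (A → D) × (A → E) =>
        (t.1, Function.update t.2 B (MvPolynomial.aeval t.2 e))) '' sem I q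
  | .agg K' V' q =>
      {p | ∃ t ∈ sem I q,
        p = ((fun a => if a ∈ K' then t.1 a else default),
             fun a => if a ∈ V' then
               ∑ᶠ s ∈ {s ∈ sem I q | ∀ b ∈ K', s.1 b = t.1 b}, s.2 a
             else 0)}

/-- Well-formedness of a query with respect to a schema `Sch` assigning key and
value attribute sets to each relation name; `WF Sch q K V` means `q : K ▷ V`. -/
inductive WF [DecidableEq A] (Sch : Rl → Set A × Set A) :
    Query A D Rl → Set A → Set A → Prop where
  | rel (r : Rl) : WF Sch (.rel r) (Sch r).1 (Sch r).2
  | sel {q : Query A D Rl} {K V : Set A} {c : (A → D) → Prop} :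
      WF Sch q K V →
      (∀ t t' : A → D, (∀ a ∈ K, t a = t' a) → (c t ↔ c t')) →
      WF Sch (.sel c q) K V
  | proj {q : Query A D Rl} {K V : Set A} (W : Set A) :
      WF Sch q K V → W ⊆ V → WF Sch (.proj W q) K (V \ W)
  | join {q₁ q₂ : Query A D Rl} {K₁ V₁ K₂ V₂ : Set A} :
      WF Sch q₁ K₁ V₁ → WF Sch q₂ K₂ V₂ →
      Disjoint V₁ V₂ → Disjoint V₁ K₂ → Disjoint V₂ K₁ →
      WF Sch (.join K₁ K₂ V₁ q₁ q₂) (K₁ ∪ K₂) (V₁ ∪ V₂)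
  | dunion {q₁ q₂ : Query A D Rl} {K V : Set A} (B : A) (d₀ d₁ : D) :
      WF Sch q₁ K V → WF Sch q₂ K V → B ∉ K ∪ V → d₀ ≠ d₁ →
      WF Sch (.dunion B d₀ d₁ q₁ q₂) (K ∪ {B}) V
  | diff {q₁ q₂ : Query A D Rl} {K V : Set A} :
      WF Sch q₁ K V → WF Sch q₂ K ∅ → WF Sch (.diff K q₁ q₂) K V
  | ren {q : Query A D Rl} {K V : Set A} (σ : A ≃ A) :
      WF Sch q K V → WF Sch (.ren σ q) (σ.symm '' K) (σ.symm '' V)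
  | derive {q : Query A D Rl} {K V : Set A} (B : A) (e : MvPolynomial A ℝ) :
      WF Sch q K V → B ∉ K ∪ V → (↑e.vars : Set A) ⊆ V →
      WF Sch (.derive B e q) K (V ∪ {B})
  | agg {q : Query A D Rl} {K V : Set A} (K' V' : Set A) :
      WF Sch q K V → K' ⊆ K → V' ⊆ V → WF Sch (.agg K' V' q) K' V'

/-- An instance is valid for a schema when each table is finite, satisfies the
functional dependency key → value, and its tuples are supported on the schema
attributes (default/zero outside). -/
def ValidInst [Inhabited D] {E : Type*} [Zero E] (Sch : Rl → Set A × Set A)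
    (I : Rl → Table A D E) : Prop :=
  ∀ r : Rl,
    (I r).Finite ∧
    (∀ t ∈ I r, ∀ t' ∈ I r,
      (∀ a ∈ (Sch r).1, t.1 a = t'.1 a) → ∀ a ∈ (Sch r).2, t.2 a = t'.2 a) ∧
    (∀ t ∈ I r, (∀ a ∉ (Sch r).1, t.1 a = default) ∧ (∀ a ∉ (Sch r).2, t.2 a = 0))

/-- Grounding a symbolic table by a valuation `h : X → ℝ`. -/
noncomputable def gMap (h : X → ℝ) (T : Table A D (MvPolynomial X ℝ)) :
    Table A D ℝ :=
  (fun t : (A → D) × (A → MvPolynomial X ℝ) =>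
    (t.1, fun a => MvPolynomial.eval h (t.2 a))) '' T

/-- The table `S` is keyed on `K`: tuples agreeing on `K` are equal. -/
def Keyed {E : Type*} (S : Table A D E) (K : Set A) : Prop :=
  ∀ t ∈ S, ∀ t' ∈ S, (∀ a ∈ K, t.1 a = t'.1 a) → t = t'

/-- The table `S` is supported on keys `K` and values `V`. -/
def Supp [Inhabited D] {E : Type*} [Zero E] (S : Table A D E) (K V : Set A) : Prop :=
  ∀ t ∈ S, (∀ a ∉ K, t.1 a = default) ∧ (∀ a ∉ V, t.2 a = 0)

lemma update_apply_of_ne {α β : Sort*} {a B : α} (h : a ≠ B) (d : β) (f : α → β)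
    {inst : DecidableEq α} :
    @Function.update α (fun _ => β) inst f B d a = f a := by
  simp [Function.update, h]

lemma update_apply_same {α β : Sort*} (B : α) (d : β) (f : α → β)
    {inst : DecidableEq α} :
    @Function.update α (fun _ => β) inst f B d B = d := by
  simp [Function.update]

lemma aeval_eq_eval' (h : X → ℝ) (p : MvPolynomial X ℝ) :
    MvPolynomial.aeval h p = MvPolynomial.eval h p :=
  congrFun (congrArg DFunLike.coe (MvPolynomial.coe_aeval_eq_eval h)) p

lemma eval_aeval' (h : X → ℝ) (g : A → MvPolynomial X ℝ) (e : MvPolynomial A ℝ) :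
    MvPolynomial.eval h (MvPolynomial.aeval g e)
      = MvPolynomial.aeval (fun a => MvPolynomial.eval h (g a)) e := by
  have h1 := congrFun (congrArg DFunLike.coe
    (MvPolynomial.comp_aeval (R := ℝ) g (MvPolynomial.aeval h))) e
  simp only [AlgHom.coe_comp, Function.comp_apply, aeval_eq_eval'] at h1
  exact h1

lemma eval_finsum_mem {α : Type*} (h : X → ℝ) {G : Set α} (hG : G.Finite)
    (f : α → MvPolynomial X ℝ) :
    MvPolynomial.eval h (∑ᶠ s ∈ G, f s) = ∑ᶠ s ∈ G, MvPolynomial.eval h (f s) := by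
  rw [← hG.coe_toFinset, finsum_mem_coe_finset, finsum_mem_coe_finset, map_sum]

/-- Key invariants propagated by well-formed queries: finiteness, keyedness,
and support. -/
lemma good [Inhabited D] [DecidableEq A] {E : Type*} [CommRing E] [Algebra ℝ E]
    (Sch : Rl → Set A × Set A) (I : Rl → Table A D E) (hI : ValidInst Sch I)
    {q : Query A D Rl} {K V : Set A} (hWF : WF Sch q K V) :
    (sem I q).Finite ∧ Keyed (sem I q) K ∧ Supp (sem I q) K V := by
  induction hWF with
  | rel r =>
    obtain ⟨hfin, hfd, hsupp⟩ := hI r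
    refine ⟨hfin, ?_, hsupp⟩
    intro t ht t' ht' hkey
    refine Prod.ext ?_ ?_
    · funext a
      by_cases hk : a ∈ (Sch r).1
      · exact hkey a hk
      · rw [(hsupp t ht).1 a hk, (hsupp t' ht').1 a hk]
    · funext a
      by_cases hv : a ∈ (Sch r).2
      · exact hfd t ht t' ht' hkey a hv
      · rw [(hsupp t ht).2 a hv, (hsupp t' ht').2 a hv]
  | sel hq hc ih =>
    obtain ⟨hfin, hkey, hsupp⟩ := ih
    exact ⟨hfin.subset (fun t ht => ht.1),
      fun t ht t' ht' hk => hkey t ht.1 t' ht'.1 hk,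
      fun t ht => hsupp t ht.1⟩
  | proj W hq hsub ih =>
    obtain ⟨hfin, hkey, hsupp⟩ := ih
    refine ⟨hfin.image _, ?_, ?_⟩
    · rintro u ⟨t, ht, rfl⟩ u' ⟨t', ht', rfl⟩ hk
      rw [hkey t ht t' ht' hk]
    · rintro u ⟨t, ht, rfl⟩
      refine ⟨(hsupp t ht).1, ?_⟩
      intro a ha
      by_cases hw : a ∈ W
      · simp [hw]
      · simp [hw, (hsupp t ht).2 a (fun hv => ha ⟨hv, hw⟩)]
  | @join q₁ q₂ K₁ V₁ K₂ V₂ hq1 hq2 hVV hVK hVK' ih1 ih2 =>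
    obtain ⟨hfin1, hkey1, hsupp1⟩ := ih1
    obtain ⟨hfin2, hkey2, hsupp2⟩ := ih2
    refine ⟨?_, ?_, ?_⟩
    · apply Set.Finite.subset ((hfin1.prod hfin2).image
        (fun p => ((fun a => if a ∈ K₁ then p.1.1 a else p.2.1 a),
                   fun a => if a ∈ V₁ then p.1.2 a else p.2.2 a)))
      rintro u ⟨r, hr, s, hs, hcomp, rfl⟩
      exact ⟨(r, s), ⟨hr, hs⟩, rfl⟩
    · rintro u ⟨r, hr, s, hs, hcomp, rfl⟩ u' ⟨r', hr', s', hs', hcomp', rfl⟩ hk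
      have hrr : r = r' := by
        apply hkey1 r hr r' hr'
        intro a ha
        have h1 := hk a (Or.inl ha)
        simpa [ha] using h1
      have hss : s = s' := by
        apply hkey2 s hs s' hs'
        intro a ha
        have h1 := hk a (Or.inr ha)
        by_cases h2 : a ∈ K₁
        · rw [← hcomp a h2 ha, ← hcomp' a h2 ha]
          simpa [h2] using h1
        · simpa [h2] using h1
      rw [hrr, hss]
    · rintro u ⟨r, hr, s, hs, hcomp, rfl⟩
      constructor
      · intro a ha
        have hk1 : a ∉ K₁ := fun h => ha (Or.inl h)
        have hk2 : a ∉ K₂ := fun h => ha (Or.inr h)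
        simp [hk1, (hsupp2 s hs).1 a hk2]
      · intro a ha
        have hv1 : a ∉ V₁ := fun h => ha (Or.inl h)
        have hv2 : a ∉ V₂ := fun h => ha (Or.inr h)
        simp [hv1, (hsupp2 s hs).2 a hv2]
  | @dunion q₁ q₂ K V B d₀ d₁ hq1 hq2 hB hd ih1 ih2 =>
    obtain ⟨hfin1, hkey1, hsupp1⟩ := ih1
    obtain ⟨hfin2, hkey2, hsupp2⟩ := ih2
    have hBK : B ∉ K := fun h => hB (Or.inl h)
    refine ⟨(hfin1.image _).union (hfin2.image _), ?_, ?_⟩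
    · have key_of : ∀ (t t' : (A → D) × (A → E)) (d : D), t ∈ sem I q₁ ∪ sem I q₂ →
        True := fun _ _ _ _ => trivial
      rintro u (⟨t, ht, rfl⟩ | ⟨t, ht, rfl⟩) u' (⟨t', ht', rfl⟩ | ⟨t', ht', rfl⟩) hk
      · have htt : t = t' := by
          apply hkey1 t ht t' ht'
          intro a haK
          have hne : a ≠ B := fun he => hBK (he ▸ haK)
          have h1 := hk a (Or.inl haK)
          simpa only [update_apply_of_ne hne] using h1
        rw [htt]
      · exfalso
        have h1 := hk B (Or.inr rfl)
        simp only [update_apply_same] at h1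
        exact hd h1
      · exfalso
        have h1 := hk B (Or.inr rfl)
        simp only [update_apply_same] at h1
        exact hd h1.symm
      · have htt : t = t' := by
          apply hkey2 t ht t' ht'
          intro a haK
          have hne : a ≠ B := fun he => hBK (he ▸ haK)
          have h1 := hk a (Or.inl haK)
          simpa only [update_apply_of_ne hne] using h1
        rw [htt]
    · rintro u (⟨t, ht, rfl⟩ | ⟨t, ht, rfl⟩)
      · refine ⟨?_, (hsupp1 t ht).2⟩
        intro a ha
        have hne : a ≠ B := fun he => ha (Or.inr he)
        simp only [update_apply_of_ne hne]
        exact (hsupp1 t ht).1 a (fun h => ha (Or.inl h))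
      · refine ⟨?_, (hsupp2 t ht).2⟩
        intro a ha
        have hne : a ≠ B := fun he => ha (Or.inr he)
        simp only [update_apply_of_ne hne]
        exact (hsupp2 t ht).1 a (fun h => ha (Or.inl h))
  | diff hq1 hq2 ih1 ih2 =>
    obtain ⟨hfin1, hkey1, hsupp1⟩ := ih1
    exact ⟨hfin1.subset (fun t ht => ht.1),
      fun t ht t' ht' hk => hkey1 t ht.1 t' ht'.1 hk,
      fun t ht => hsupp1 t ht.1⟩
  | ren σ hq ih =>
    obtain ⟨hfin, hkey, hsupp⟩ := ih
    refine ⟨hfin.image _, ?_, ?_⟩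
    · rintro u ⟨t, ht, rfl⟩ u' ⟨t', ht', rfl⟩ hk
      have htt : t = t' := by
        apply hkey t ht t' ht'
        intro a ha
        have h1 := hk (σ.symm a) ⟨a, ha, rfl⟩
        simpa using h1
      rw [htt]
    · rintro u ⟨t, ht, rfl⟩
      constructor
      · intro a ha
        exact (hsupp t ht).1 (σ a) (fun h => ha ⟨σ a, h, by simp⟩)
      · intro a ha
        exact (hsupp t ht).2 (σ a) (fun h => ha ⟨σ a, h, by simp⟩)
  | derive B e hq hB hvars ih =>
    obtain ⟨hfin, hkey, hsupp⟩ := ih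
    refine ⟨hfin.image _, ?_, ?_⟩
    · rintro u ⟨t, ht, rfl⟩ u' ⟨t', ht', rfl⟩ hk
      rw [hkey t ht t' ht' hk]
    · rintro u ⟨t, ht, rfl⟩
      refine ⟨(hsupp t ht).1, ?_⟩
      intro a ha
      have hne : a ≠ B := fun he => ha (Or.inr he)
      simp only [update_apply_of_ne hne]
      exact (hsupp t ht).2 a (fun h => ha (Or.inl h))
  | @agg q K V K' V' hq hK' hV' ih =>
    obtain ⟨hfin, hkey, hsupp⟩ := ih
    have himg : sem I (.agg K' V' q)
        = (fun t : (A → D) × (A → E) => ((fun a => if a ∈ K' then t.1 a else default),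
            fun a => if a ∈ V' then
              ∑ᶠ s ∈ {s ∈ sem I q | ∀ b ∈ K', s.1 b = t.1 b}, s.2 a else 0)) '' sem I q := by
      ext p
      simp only [sem, Set.mem_setOf_eq, Set.mem_image]
      constructor
      · rintro ⟨t, ht, rfl⟩; exact ⟨t, ht, rfl⟩
      · rintro ⟨t, ht, rfl⟩; exact ⟨t, ht, rfl⟩
    rw [himg]
    refine ⟨hfin.image _, ?_, ?_⟩
    · rintro u ⟨t, ht, rfl⟩ u' ⟨t', ht', rfl⟩ hk
      have hkk : ∀ b ∈ K', t.1 b = t'.1 b := by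
        intro b hb
        have h1 := hk b hb
        simpa [hb] using h1
      have hgroup : {s ∈ sem I q | ∀ b ∈ K', s.1 b = t.1 b}
          = {s ∈ sem I q | ∀ b ∈ K', s.1 b = t'.1 b} := by
        ext s
        constructor
        · rintro ⟨hs, hsk⟩
          exact ⟨hs, fun b hb => (hsk b hb).trans (hkk b hb)⟩
        · rintro ⟨hs, hsk⟩
          exact ⟨hs, fun b hb => (hsk b hb).trans (hkk b hb).symm⟩
      refine Prod.ext ?_ ?_
      · funext a
        by_cases h : a ∈ K'
        · simpa [h] using hkk a h
        · simp [h]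
      · funext a
        by_cases h : a ∈ V'
        · simp only [if_pos h]
          rw [hgroup]
        · simp [h]
    · rintro u ⟨t, ht, rfl⟩
      exact ⟨fun a ha => by simp [ha], fun a ha => by simp [ha]⟩

/-- Commutation of semantics with grounding: `q(h(I)) = h(q(I))`. -/
lemma gMap_sem [Inhabited D] [DecidableEq A]
    (Sch : Rl → Set A × Set A) (I : Rl → Table A D (MvPolynomial X ℝ))
    (hI : ValidInst Sch I) {q : Query A D Rl} {K V : Set A}
    (hWF : WF Sch q K V) (h : X → ℝ) :
    sem (fun r => gMap h (I r)) q = gMap h (sem I q) := by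
  induction hWF with
  | rel r => rfl
  | sel hq hc ih =>
    simp only [sem, ih]
    ext u
    constructor
    · rintro ⟨⟨t, ht, rfl⟩, hcu⟩
      exact ⟨t, ⟨ht, hcu⟩, rfl⟩
    · rintro ⟨t, ⟨ht, hcu⟩, rfl⟩
      exact ⟨⟨t, ht, rfl⟩, hcu⟩
  | proj W hq hsub ih =>
    simp only [sem]
    rw [ih]
    simp only [gMap, Set.image_image]
    apply Set.image_congr'
    intro t
    refine Prod.ext rfl ?_
    funext a
    by_cases hw : a ∈ W <;> simp [hw]
  | @join q₁ q₂ K₁ V₁ K₂ V₂ hq1 hq2 hVV hVK hVK' ih1 ih2 =>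
    simp only [sem, ih1, ih2]
    ext u
    constructor
    · rintro ⟨_, ⟨r, hr, rfl⟩, _, ⟨s, hs, rfl⟩, hcomp, rfl⟩
      refine ⟨_, ⟨r, hr, s, hs, hcomp, rfl⟩, ?_⟩
      refine Prod.ext rfl ?_
      funext a
      by_cases hv : a ∈ V₁ <;> simp [hv]
    · rintro ⟨t, ⟨r, hr, s, hs, hcomp, rfl⟩, rfl⟩
      refine ⟨_, ⟨r, hr, rfl⟩, _, ⟨s, hs, rfl⟩, hcomp, ?_⟩
      refine Prod.ext rfl ?_
      funext a
      by_cases hv : a ∈ V₁ <;> simp [hv]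
  | @dunion q₁ q₂ K V B d₀ d₁ hq1 hq2 hB hd ih1 ih2 =>
    simp only [sem]
    rw [ih1, ih2]
    simp only [gMap, Set.image_union, Set.image_image]
  | diff hq1 hq2 ih1 ih2 =>
    simp only [sem, ih1, ih2]
    ext u
    constructor
    · rintro ⟨⟨t, ht, rfl⟩, hne⟩
      refine ⟨t, ⟨ht, ?_⟩, rfl⟩
      rintro ⟨s, hs, hagree⟩
      exact hne ⟨(s.1, fun a => MvPolynomial.eval h (s.2 a)), ⟨s, hs, rfl⟩, hagree⟩
    · rintro ⟨t, ⟨ht, hne⟩, rfl⟩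
      refine ⟨⟨t, ht, rfl⟩, ?_⟩
      rintro ⟨s', ⟨s, hs, rfl⟩, hagree⟩
      exact hne ⟨s, hs, hagree⟩
  | ren σ hq ih =>
    simp only [sem]
    rw [ih]
    simp only [gMap, Set.image_image]
    rfl
  | derive B e hq hBm hvars ih =>
    simp only [sem]
    rw [ih]
    simp only [gMap, Set.image_image]
    apply Set.image_congr'
    intro t
    refine Prod.ext rfl ?_
    funext a
    by_cases hb : a = B
    · subst hb
      simp only [update_apply_same]
      exact (eval_aeval' h t.2 e).symm
    · simp only [update_apply_of_ne hb]
  | @agg q K V K' V' hq hK' hV' ih =>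
    obtain ⟨hfin, hkey, hsupp⟩ := good Sch I hI hq
    have hinj : Set.InjOn (fun t : (A → D) × (A → MvPolynomial X ℝ) =>
        (t.1, fun a => MvPolynomial.eval h (t.2 a))) (sem I q) := by
      intro t ht t' ht' he
      apply hkey t ht t' ht'
      intro a _
      exact congrFun (congrArg Prod.fst he) a
    have hgroup : ∀ t ∈ sem I q, ∀ a : A,
        (∑ᶠ s ∈ {s ∈ gMap h (sem I q) | ∀ b ∈ K', s.1 b = t.1 b}, s.2 a)
          = MvPolynomial.eval h
              (∑ᶠ s ∈ {s ∈ sem I q | ∀ b ∈ K', s.1 b = t.1 b}, s.2 a) := by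
      intro t ht a
      have hset : {s ∈ gMap h (sem I q) | ∀ b ∈ K', s.1 b = t.1 b}
          = (fun t : (A → D) × (A → MvPolynomial X ℝ) =>
              (t.1, fun a => MvPolynomial.eval h (t.2 a)))
            '' {s ∈ sem I q | ∀ b ∈ K', s.1 b = t.1 b} := by
        ext u
        constructor
        · rintro ⟨⟨s, hs, rfl⟩, hsk⟩
          exact ⟨s, ⟨hs, hsk⟩, rfl⟩
        · rintro ⟨s, ⟨hs, hsk⟩, rfl⟩
          exact ⟨⟨s, hs, rfl⟩, hsk⟩
      have hGfin : {s ∈ sem I q | ∀ b ∈ K', s.1 b = t.1 b}.Finite :=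
        hfin.subset (fun s hs => hs.1)
      rw [hset, finsum_mem_image (hinj.mono (fun s hs => hs.1)),
        eval_finsum_mem h hGfin]
    simp only [sem, ih]
    ext u
    constructor
    · rintro ⟨t', ⟨t, ht, rfl⟩, rfl⟩
      refine ⟨((fun a => if a ∈ K' then t.1 a else default),
        fun a => if a ∈ V' then
          ∑ᶠ s ∈ {s ∈ sem I q | ∀ b ∈ K', s.1 b = t.1 b}, s.2 a else 0),
        ⟨t, ht, rfl⟩, ?_⟩
      refine Prod.ext rfl ?_
      funext a
      by_cases hv : a ∈ V'
      · simp only [if_pos hv]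
        exact (hgroup t ht a).symm
      · simp [hv]
    · rintro ⟨p, ⟨t, ht, rfl⟩, rfl⟩
      refine ⟨(t.1, fun a => MvPolynomial.eval h (t.2 a)), ⟨t, ht, rfl⟩, ?_⟩
      refine Prod.ext rfl ?_
      funext a
      by_cases hv : a ∈ V'
      · simp only [if_pos hv]
        exact (hgroup t ht a).symm
      · simp [hv]

/-- for any well-formed query `q` and any valid s-instance `I`
over globally scoped variables `X`, the set of ground query results over all
valuations equals the set of groundings of the symbolic result:
`q⟦I⟧ = ⟦q(I)⟧`. -/
theorem symbolic_evaluation_correct [Inhabited D] [DecidableEq A]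
    (Sch : Rl → Set A × Set A) (q : Query A D Rl) (K V : Set A)
    (I : Rl → Table A D (MvPolynomial X ℝ))
    (hWF : WF Sch q K V) (hI : ValidInst Sch I) :
    {T : Table A D ℝ | ∃ h : X → ℝ, T = sem (fun r => gMap h (I r)) q}
      = {T : Table A D ℝ | ∃ h : X → ℝ, T = gMap h (sem I q)} := by
  ext T
  simp only [Set.mem_setOf_eq]
  constructor
  · rintro ⟨h, rfl⟩
    exact ⟨h, gMap_sem Sch I hI hWF h⟩
  · rintro ⟨h, rfl⟩
    exact ⟨h, (gMap_sem Sch I hI hWF h).symm⟩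

end Eris
end

section
/- Coalescing soundness: let R : K ∪ {D} ▷ V be a linear s-table, and let κ_D(R, φ) = (T, φ ∧ ψ) be the coalescing construction that, for each group of tuples agreeing on K\{D} but differing on D (the set R⁺), replaces each value attribute Bᵢ with a fresh variable L_{k,Bᵢ} and adds equations L_{k,Bᵢ} = t[Bᵢ] for every t ∈ R⁺ in the group, keeping tuples of R \ R⁺ unchanged. Then for every valuation h : X ∪ L → ℝ satisfying φ ∧ ψ, the ground table h(T) satisfies the FD K\{D} → V and equals the projection π̂_D(h(R)); conversely, every valuation h of X satisfying φ such that π̂_D(h(R)) satisfies K\{D} → V extends to a valuation of the L-variables satisfying ψ with h(T) = π̂_D(h(R)). -/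
open scoped Classical

namespace Coalescing

variable {A D X : Type*}

/-- The functional dependency `K → V` for a ground table. -/
def FDg {A D E : Type*} (K V : Set A) (T : Set ((A → D) × (A → E))) : Prop :=
  ∀ t ∈ T, ∀ t' ∈ T, (∀ a ∈ K, t.1 a = t'.1 a) → ∀ a ∈ V, t.2 a = t'.2 a

/-- `R⁺`: the tuples of `R` for which some other tuple agrees on `K \ {Dd}`
but differs on the discriminant `Dd`. -/
def Rplus (K : Set A) (Dd : A) (R : Set ((A → D) × (A → MvPolynomial X ℝ))) :
    Set ((A → D) × (A → MvPolynomial X ℝ)) :=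
  {t ∈ R | ∃ t' ∈ R, (∀ a ∈ K \ {Dd}, t.1 a = t'.1 a) ∧ t.1 Dd ≠ t'.1 Dd}

/-- The coalesced s-table `T`: tuples of `R⁺` get fresh LLUN variables
`L_{t[K\{Dd}],a}` in every value attribute, tuples of `R \ R⁺` keep their
values; the discriminant key attribute `Dd` is projected away (reset to the
default key value). -/
noncomputable def coalT [Inhabited D] (K V : Set A) (Dd : A)
    (Lvar : (A → D) → A → X)
    (R : Set ((A → D) × (A → MvPolynomial X ℝ))) :
    Set ((A → D) × (A → MvPolynomial X ℝ)) :=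
  (fun t : (A → D) × (A → MvPolynomial X ℝ) =>
      (Function.update t.1 Dd (default : D),
       fun a => if a ∈ V then (MvPolynomial.X (Lvar t.1 a) : MvPolynomial X ℝ) else 0)) ''
    Rplus K Dd R ∪
  (fun t : (A → D) × (A → MvPolynomial X ℝ) =>
      (Function.update t.1 Dd (default : D),
       fun a => if a ∈ V then t.2 a else 0)) '' (R \ Rplus K Dd R)

/-- The constraint `ψ`: each LLUN variable equals the observed symbolic value. -/
def psi (K V : Set A) (Dd : A) (Lvar : (A → D) → A → X)
    (R : Set ((A → D) × (A → MvPolynomial X ℝ))) (h : X → ℝ) : Prop :=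
  ∀ t ∈ Rplus K Dd R, ∀ a ∈ V, h (Lvar t.1 a) = MvPolynomial.eval h (t.2 a)

/-- Grounding of a symbolic table by a valuation. -/
noncomputable def gMap (h : X → ℝ)
    (T : Set ((A → D) × (A → MvPolynomial X ℝ))) : Set ((A → D) × (A → ℝ)) :=
  (fun t : (A → D) × (A → MvPolynomial X ℝ) =>
    (t.1, fun a => MvPolynomial.eval h (t.2 a))) '' T

/-- `π̂_D(h(R))`: ground `R` by `h` and project away the discriminant key. -/
noncomputable def projD [Inhabited D] (V : Set A) (Dd : A) (h : X → ℝ)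
    (R : Set ((A → D) × (A → MvPolynomial X ℝ))) : Set ((A → D) × (A → ℝ)) :=
  (fun t : (A → D) × (A → MvPolynomial X ℝ) =>
    (Function.update t.1 Dd (default : D),
     fun a => if a ∈ V then MvPolynomial.eval h (t.2 a) else 0)) '' R

/-- soundness of coalescing `κ_D(R, φ) = (T, φ ∧ ψ)` for a
linear s-table `R : K ▷ V` with discriminant `Dd ∈ K`, fresh LLUN variables
`Lvar` (depending only on the `K \ {Dd}` part of the key, injective, and not
occurring in `R` nor in `φ`): every valuation satisfying `φ ∧ ψ` grounds `T`
to a table satisfying the FD `K \ {Dd} → V` and equal to `π̂_D(h(R))`;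
conversely every valuation `h` satisfying `φ` for which `π̂_D(h(R))`
satisfies `K \ {Dd} → V` extends (changing it only on LLUN variables) to a
valuation satisfying `φ ∧ ψ` that grounds `T` to `π̂_D(h(R))`. -/
theorem coalescing_soundness [Inhabited D] [DecidableEq X]
    (K V : Set A) (Dd : A) (hDd : Dd ∈ K) (hKV : Disjoint K V)
    (R : Set ((A → D) × (A → MvPolynomial X ℝ)))
    (hFD : ∀ t ∈ R, ∀ t' ∈ R, (∀ a ∈ K, t.1 a = t'.1 a) → ∀ a ∈ V, t.2 a = t'.2 a)
    (hLin : ∀ t ∈ R, ∀ a : A, (t.2 a).totalDegree ≤ 1)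
    (Lvar : (A → D) → A → X)
    (hLkey : ∀ k k' : A → D, (∀ a ∈ K \ {Dd}, k a = k' a) → ∀ b : A, Lvar k b = Lvar k' b)
    (hLinj : ∀ k k' : A → D, ∀ b b' : A,
      Lvar k b = Lvar k' b' → b = b' ∧ ∀ a ∈ K \ {Dd}, k a = k' a)
    (hfresh : ∀ t ∈ R, ∀ a : A, ∀ k : A → D, ∀ b : A, Lvar k b ∉ (t.2 a).vars)
    (φ : (X → ℝ) → Prop)
    (hφL : ∀ h h' : X → ℝ,
      (∀ x : X, (∀ k : A → D, ∀ b : A, x ≠ Lvar k b) → h x = h' x) → (φ h ↔ φ h')) :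
    (∀ h : X → ℝ, φ h → psi K V Dd Lvar R h →
      FDg (K \ {Dd}) V (gMap h (coalT K V Dd Lvar R)) ∧
      gMap h (coalT K V Dd Lvar R) = projD V Dd h R) ∧
    (∀ h : X → ℝ, φ h → FDg (K \ {Dd}) V (projD V Dd h R) →
      ∃ h' : X → ℝ,
        (∀ x : X, (∀ k : A → D, ∀ b : A, x ≠ Lvar k b) → h' x = h x) ∧
        φ h' ∧ psi K V Dd Lvar R h' ∧
        gMap h' (coalT K V Dd Lvar R) = projD V Dd h R) := by
  classical
  -- agreement of evaluations on variables
  have evalCongr : ∀ (f g : X → ℝ) (p : MvPolynomial X ℝ),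
      (∀ i ∈ p.vars, f i = g i) → MvPolynomial.eval f p = MvPolynomial.eval g p := by
    intro f g p hp
    exact MvPolynomial.eval₂Hom_congr' rfl (fun i hi _ => hp i hi) rfl
  have hRsub : Rplus K Dd R ⊆ R := fun t ht => ht.1
  -- Key equality lemma: under psi, gMap of coalT is projD.
  have keyA : ∀ h : X → ℝ, psi K V Dd Lvar R h →
      gMap h (coalT K V Dd Lvar R) = projD V Dd h R := by
    intro h hpsi
    unfold gMap coalT projD
    rw [Set.image_union, Set.image_image, Set.image_image]
    have e1 : ∀ t ∈ Rplus K Dd R,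
        ((fun t : (A → D) × (A → MvPolynomial X ℝ) =>
          ((Function.update t.1 Dd (default : D),
            fun a => MvPolynomial.eval h
              (if a ∈ V then (MvPolynomial.X (Lvar t.1 a) : MvPolynomial X ℝ) else 0)) :
            (A → D) × (A → ℝ))) t)
        = (fun t : (A → D) × (A → MvPolynomial X ℝ) =>
            ((Function.update t.1 Dd (default : D),
              fun a => if a ∈ V then MvPolynomial.eval h (t.2 a) else 0) :
              (A → D) × (A → ℝ))) t := by
      intro t ht
      refine Prod.ext rfl ?_
      funext a
      by_cases haV : a ∈ V
      · simp only [haV, if_true, MvPolynomial.eval_X]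
        exact hpsi t ht a haV
      · simp [haV]
    have e2 : ∀ t ∈ R \ Rplus K Dd R,
        ((fun t : (A → D) × (A → MvPolynomial X ℝ) =>
          ((Function.update t.1 Dd (default : D),
            fun a => MvPolynomial.eval h (if a ∈ V then t.2 a else 0)) :
            (A → D) × (A → ℝ))) t)
        = (fun t : (A → D) × (A → MvPolynomial X ℝ) =>
            ((Function.update t.1 Dd (default : D),
              fun a => if a ∈ V then MvPolynomial.eval h (t.2 a) else 0) :
              (A → D) × (A → ℝ))) t := by
      intro t _
      refine Prod.ext rfl ?_
      funext a
      by_cases haV : a ∈ V <;> simp [haV]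
    rw [Set.image_congr e1, Set.image_congr e2, ← Set.image_union,
      Set.union_diff_cancel hRsub]
  -- Key FD lemma: under psi, projD satisfies the FD.
  have keyB : ∀ h : X → ℝ, psi K V Dd Lvar R h →
      FDg (K \ {Dd}) V (projD V Dd h R) := by
    intro h hpsi
    rintro p ⟨t, htR, rfl⟩ p' ⟨t', ht'R, rfl⟩ hkey a haV
    have hkey' : ∀ b ∈ K \ {Dd}, t.1 b = t'.1 b := by
      intro b hb
      have hbD : b ≠ Dd := hb.2
      have := hkey b hb
      simpa [Function.update_of_ne hbD] using this
    simp only [if_pos haV]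
    by_cases hD : t.1 Dd = t'.1 Dd
    · have : t.2 a = t'.2 a := by
        refine hFD t htR t' ht'R ?_ a haV
        intro b hbK
        by_cases hbD : b = Dd
        · subst hbD; exact hD
        · exact hkey' b ⟨hbK, hbD⟩
      rw [this]
    · have ht : t ∈ Rplus K Dd R := ⟨htR, t', ht'R, hkey', hD⟩
      have ht' : t' ∈ Rplus K Dd R :=
        ⟨ht'R, t, htR, fun b hb => (hkey' b hb).symm, Ne.symm hD⟩
      have hL : Lvar t.1 a = Lvar t'.1 a := hLkey t.1 t'.1 hkey' a
      rw [← hpsi t ht a haV, ← hpsi t' ht' a haV, hL]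
  constructor
  · intro h hφ hpsi
    refine ⟨?_, keyA h hpsi⟩
    rw [keyA h hpsi]
    exact keyB h hpsi
  · intro h hφ hFDp
    -- uniqueness of the value assigned to an LLUN variable
    have huniq : ∀ t ∈ Rplus K Dd R, ∀ a ∈ V, ∀ t' ∈ Rplus K Dd R, ∀ a' ∈ V,
        Lvar t.1 a = Lvar t'.1 a' →
        MvPolynomial.eval h (t.2 a) = MvPolynomial.eval h (t'.2 a') := by
      intro t ht a haV t' ht' a' ha'V hLeq
      obtain ⟨rfl, hkk⟩ := hLinj t.1 t'.1 a a' hLeq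
      have h1 : (Function.update t.1 Dd (default : D),
          fun b => if b ∈ V then MvPolynomial.eval h (t.2 b) else 0) ∈ projD V Dd h R :=
        ⟨t, ht.1, rfl⟩
      have h2 : (Function.update t'.1 Dd (default : D),
          fun b => if b ∈ V then MvPolynomial.eval h (t'.2 b) else 0) ∈ projD V Dd h R :=
        ⟨t', ht'.1, rfl⟩
      have := hFDp _ h1 _ h2 ?_ a haV
      · simpa [if_pos haV] using this
      · intro b hb
        have hbD : b ≠ Dd := hb.2
        simp only [Function.update_of_ne hbD]
        exact hkk b hb
    -- construct the extension h'
    set Pred : X → Prop := fun x => ∃ q : ((A → D) × (A → MvPolynomial X ℝ)) × A,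
      q.1 ∈ Rplus K Dd R ∧ q.2 ∈ V ∧ x = Lvar q.1.1 q.2 with hPred
    let h' : X → ℝ := fun x =>
      if hx : Pred x then
        MvPolynomial.eval h ((Classical.choose hx).1.2 (Classical.choose hx).2)
      else h x
    have hagree : ∀ x : X, (∀ k : A → D, ∀ b : A, x ≠ Lvar k b) → h' x = h x := by
      intro x hx
      have : ¬ Pred x := by
        rintro ⟨q, _, _, rfl⟩
        exact hx q.1.1 q.2 rfl
      simp only [h', dif_neg this]
    -- h' agrees with h on the variables of any polynomial in R
    have hevalR : ∀ t ∈ R, ∀ a : A,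
        MvPolynomial.eval h' (t.2 a) = MvPolynomial.eval h (t.2 a) := by
      intro t htR a
      refine evalCongr h' h _ ?_
      intro i hi
      refine hagree i ?_
      intro k b hib
      exact hfresh t htR a k b (hib ▸ hi)
    have hpsi' : psi K V Dd Lvar R h' := by
      intro t ht a haV
      have hx : Pred (Lvar t.1 a) := ⟨(t, a), ht, haV, rfl⟩
      have hspec := Classical.choose_spec hx
      have : h' (Lvar t.1 a) =
          MvPolynomial.eval h ((Classical.choose hx).1.2 (Classical.choose hx).2) := by
        simp only [h', dif_pos hx]
      rw [this, hevalR t ht.1 a]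
      exact (huniq _ hspec.1 _ hspec.2.1 t ht a haV hspec.2.2.symm)
    have hφ' : φ h' := (hφL h' h hagree).mpr hφ
    refine ⟨h', hagree, hφ', hpsi', ?_⟩
    rw [keyA h' hpsi']
    unfold projD
    refine Set.image_congr ?_
    intro t htR
    refine Prod.ext rfl ?_
    funext a
    by_cases haV : a ∈ V <;> simp [haV, hevalR t htR a]

end Coalescing
end
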